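/- Let (X_t)_{t ∈ ℝ} be an ℝ^d-valued stochastic process on a probability space (Ω,ℱ,ℙ) with ℙ-almost surely continuous paths, and let P_T be a probability measure on ℝ such that Lebesgue measure is absolutely continuous with respect to P_T. Then X is stationary if and only if for every n ∈ ℕ and all t₁,…,tₙ ∈ ℝ the induced drift process (p^{(t₁,…,tₙ)}_τ, P_T) has no drift. -/

import Mathlib

open MeasureTheory ProbabilityTheory
open scoped NNReal ENNReal

/-- A stochastic process `(X_t)_{t ∈ ℝ}` is *stationary* if all its finite-dimensional
distributions are invariant under time shifts. -/
def Stationary {Ω 𝔛 : Type*} [MeasurableSpace Ω] [MeasurableSpace 𝔛]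
    (P : Measure Ω) (X : ℝ → Ω → 𝔛) : Prop :=
  ∀ (n : ℕ) (t : Fin n → ℝ) (τ : ℝ),
    P.map (fun ω i => X (t i) ω) = P.map (fun ω i => X (t i + τ) ω)

/-- Let `(X_t)_{t ∈ ℝ}` be an `ℝ^d`-valued stochastic process with `P`-a.s. continuous
paths and let `P_T` be a probability measure on `ℝ` such that Lebesgue measure is
absolutely continuous with respect to `P_T`. Then `X` is stationary iff for every `n`
and all `t₁, …, tₙ` the induced drift process `p^{(t₁,…,tₙ)}_τ = P∘(X_{t₁+τ},…,X_{tₙ+τ})⁻¹`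
has no drift. -/
theorem stationary_iff_noDrift_of_continuous_paths {Ω : Type*} [MeasurableSpace Ω]
    {d : ℕ} (P : Measure Ω) [IsProbabilityMeasure P] (X : ℝ → Ω → EuclideanSpace ℝ (Fin d))
    (hX : ∀ t, Measurable (X t))
    (hcont : ∀ᵐ ω ∂P, Continuous fun t => X t ω)
    (PT : Measure ℝ) [IsProbabilityMeasure PT] (hac : (volume : Measure ℝ) ≪ PT) :
    Stationary P X ↔
      ∀ (n : ℕ) (t : Fin n → ℝ),
        ∀ᵐ στ ∂(PT.prod PT),
          P.map (fun ω i => X (t i + στ.1) ω) = P.map (fun ω i => X (t i + στ.2) ω) := by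
  constructor
  · intro hS n t
    refine Filter.Eventually.of_forall fun στ => ?_
    rw [← hS n t στ.1, ← hS n t στ.2]
  · intro h n t τ
    set Y := Fin n → EuclideanSpace ℝ (Fin d)
    set μ : ℝ → Measure Y := fun τ => P.map (fun ω i => X (t i + τ) ω) with hμ
    have hmeas : ∀ τ : ℝ, Measurable (fun ω i => X (t i + τ) ω) := fun τ =>
      measurable_pi_lambda _ fun i => hX _
    haveI : ∀ τ : ℝ, IsProbabilityMeasure (μ τ) := fun τ =>
      Measure.isProbabilityMeasure_map (hmeas τ).aemeasurable
    have key : ∀ σ τ' : ℝ, μ σ = μ τ' := by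
      intro σ τ'
      apply ext_of_forall_lintegral_eq_of_IsFiniteMeasure
      intro g
      set F : ℝ → ℝ := fun τ => ∫ ω, (g (fun i => X (t i + τ) ω) : ℝ) ∂P with hF
      have hFint : ∀ τ : ℝ, ∫ x, (g x : ℝ) ∂(μ τ) = F τ := by
        intro τ
        rw [hμ]
        exact integral_map (hmeas τ).aemeasurable
          (NNReal.continuous_coe.comp g.continuous).aestronglyMeasurable
      have hFc : Continuous F := by
        refine continuous_of_dominated (bound := fun _ => ((nndist g 0 : ℝ≥0) : ℝ)) ?_ ?_
          (integrable_const _) ?_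
        · intro τ
          exact ((NNReal.continuous_coe.comp g.continuous).measurable.comp
            (hmeas τ)).aestronglyMeasurable
        · intro τ
          refine Filter.Eventually.of_forall fun ω => ?_
          have := BoundedContinuousFunction.NNReal.upper_bound g (fun i => X (t i + τ) ω)
          simpa [Real.norm_eq_abs, abs_of_nonneg, NNReal.coe_le_coe] using
            (NNReal.coe_le_coe.mpr this).trans_eq (coe_nndist g 0)
        · filter_upwards [hcont] with ω hω
          exact (NNReal.continuous_coe.comp g.continuous).comp
            (continuous_pi fun i => hω.comp (continuous_const.add continuous_id))
      have hae : ∀ᵐ στ ∂((volume : Measure ℝ).prod volume), F στ.1 = F στ.2 := by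
        filter_upwards [(hac.prod hac) (h n t)] with στ hστ
        have h2 := congrArg (fun ν : Measure Y => ∫ x, (g x : ℝ) ∂ν) hστ
        rw [← hFint στ.1, ← hFint στ.2]
        exact h2
      have hclosed : IsClosed {στ : ℝ × ℝ | F στ.1 = F στ.2} :=
        isClosed_eq (hFc.comp continuous_fst) (hFc.comp continuous_snd)
      have h0 : ((volume : Measure ℝ).prod volume) {στ : ℝ × ℝ | F στ.1 = F στ.2}ᶜ = 0 := by
        have := MeasureTheory.ae_iff.mp hae
        simpa [Set.compl_setOf] using this
      have hS : {στ : ℝ × ℝ | F στ.1 = F στ.2} = Set.univ := by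
        rw [← MeasureTheory.Measure.volume_eq_prod] at h0
        rw [← Set.compl_empty_iff]
        by_contra hne'
        exact absurd h0 (ne_of_gt (hclosed.isOpen_compl.measure_pos volume
          (Set.nonempty_iff_ne_empty.mpr hne')))
      have hFconst : F σ = F τ' := Set.eq_univ_iff_forall.mp hS (σ, τ')
      have hlt : ∀ τ0 : ℝ, ∫⁻ x, (g x : ℝ≥0∞) ∂(μ τ0) ≠ ⊤ := fun τ0 =>
        (BoundedContinuousFunction.lintegral_lt_top_of_nnreal (μ τ0) g).ne
      rw [← ENNReal.toReal_eq_toReal_iff' (hlt σ) (hlt τ'),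
        BoundedContinuousFunction.toReal_lintegral_coe_eq_integral,
        BoundedContinuousFunction.toReal_lintegral_coe_eq_integral, hFint σ, hFint τ']
      exact hFconst
    have := key 0 τ
    simpa [hμ] using this
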